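/- Let F be an invertible 2×2 complex matrix and T = diag(i, −i). If (F̄ᵗ)⁻¹ = T F T⁻¹, then the matrix f = F̄ᵗ F has equal diagonal entries. -/
import Mathlib


open Matrix Complex

/-- If `F` is an invertible 2×2 complex matrix, `T = diag(i, -i)`, and
`(F̄ᵗ)⁻¹ = T F T⁻¹`, then `f = F̄ᵗ F` has equal diagonal entries. -/
theorem diag_entries_equal (F : Matrix (Fin 2) (Fin 2) ℂ) (hF : IsUnit F.det)
    (h : (Fᴴ)⁻¹ = !![I, 0; 0, -I] * F * (!![I, 0; 0, -I])⁻¹) :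
    (Fᴴ * F) 0 0 = (Fᴴ * F) 1 1 := by
  have hT : (!![I, 0; 0, -I] : Matrix (Fin 2) (Fin 2) ℂ)⁻¹ = !![-I, 0; 0, I] := by
    apply Matrix.inv_eq_right_inv
    simp [Matrix.mul_fin_two, Matrix.one_fin_two, Complex.I_mul_I]
  rw [hT] at h
  have hu : IsUnit (Fᴴ).det := by
    rw [Matrix.det_conjTranspose]; exact hF.star
  have hG : !![I, 0; 0, -I] * F * !![-I, 0; 0, I]
      = !![F 0 0, -F 0 1; -F 1 0, F 1 1] := by
    ext i j
    fin_cases i <;> fin_cases j <;>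
      simp [Matrix.mul_apply, Matrix.vecMul, dotProduct, Fin.sum_univ_two,
        Complex.I_mul_I] <;> ring_nf <;> simp [Complex.I_sq]
  rw [hG] at h
  have E1 : Fᴴ * !![F 0 0, -F 0 1; -F 1 0, F 1 1] = 1 := by
    rw [← h]; exact Matrix.mul_nonsing_inv _ hu
  have E2 : !![F 0 0, -F 0 1; -F 1 0, F 1 1] * Fᴴ = 1 := by
    rw [← h]; exact Matrix.nonsing_inv_mul _ hu
  have e1 := congrArg (fun M : Matrix (Fin 2) (Fin 2) ℂ => M 0 0) E1
  have e2 := congrArg (fun M : Matrix (Fin 2) (Fin 2) ℂ => M 1 1) E1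
  have e3 := congrArg (fun M : Matrix (Fin 2) (Fin 2) ℂ => M 0 0) E2
  have e4 := congrArg (fun M : Matrix (Fin 2) (Fin 2) ℂ => M 1 1) E2
  simp [Matrix.mul_apply, Fin.sum_univ_two, Matrix.one_apply,
    Matrix.conjTranspose_apply] at e1 e2 e3 e4 ⊢
  linear_combination e1 + e2 - 2 * e4
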